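/- Let H be a complex Hilbert space equipped with the triple product {a,b,c} = ½(⟨a,b⟩c + ⟨c,b⟩a), let F be an anisotropic Jordan Banach triple, and let T : H → F be a generalised triple homomorphism. If (xₙ) is a norm-null sequence in H with T(xₙ) → z in F, then {T(a), z, T(c)} = 0 for all a, c ∈ H. -/

import Mathlib

open Filter Topology

/-- A (real) Jordan Banach triple: a Banach space with a continuous triple
product, (real-)linear in each variable, symmetric in the outer variables and
satisfying the Jordan identity. -/
structure JordanBanachTriple (E : Type*) [NormedAddCommGroup E] [NormedSpace ℝ E] where
  tp : E → E → E → E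
  add_left : ∀ a a' b c, tp (a + a') b c = tp a b c + tp a' b c
  smul_left : ∀ (r : ℝ) a b c, tp (r • a) b c = r • tp a b c
  add_mid : ∀ a b b' c, tp a (b + b') c = tp a b c + tp a b' c
  smul_mid : ∀ (r : ℝ) a b c, tp a (r • b) c = r • tp a b c
  symm : ∀ a b c, tp a b c = tp c b a
  jordan : ∀ a b x y z,
    tp a b (tp x y z) = tp (tp a b x) y z - tp x (tp b a y) z + tp x y (tp a b z)
  bound : ∃ C > 0, ∀ a b c, ‖tp a b c‖ ≤ C * ‖a‖ * ‖b‖ * ‖c‖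

def sepSpace {X Y : Type*} [NormedAddCommGroup X] [NormedAddCommGroup Y]
    (T : X → Y) : Set Y :=
  {z | ∃ x : ℕ → X, Tendsto x atTop (𝓝 0) ∧ Tendsto (fun n => T (x n)) atTop (𝓝 z)}

/-- The Hilbert-space triple product `{a,b,c} = ½(⟨a,b⟩c + ⟨c,b⟩a)`, with
`⟨·,·⟩` linear in the first variable. -/
noncomputable def htp {H : Type*} [NormedAddCommGroup H] [InnerProductSpace ℂ H]
    (a b c : H) : H :=
  (2 : ℂ)⁻¹ • ((inner ℂ b a : ℂ) • c + (inner ℂ b c : ℂ) • a)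

theorem stmt15 {H F : Type*}
    [NormedAddCommGroup H] [InnerProductSpace ℂ H] [CompleteSpace H]
    [NormedAddCommGroup F] [NormedSpace ℝ F] [CompleteSpace F]
    (JF : JordanBanachTriple F)
    (haniso : ∀ z : F, JF.tp z z z = 0 → z = 0)
    (T : H →ₗ[ℝ] F) (C : ℝ) (hC : 0 < C)
    (h : ∀ a b c : H, ‖T (htp a b c) - JF.tp (T a) (T b) (T c)‖ ≤ C * ‖a‖ * ‖b‖ * ‖c‖)
    (x : ℕ → H) (z : F) (hx : Tendsto x atTop (𝓝 0))
    (hTx : Tendsto (fun n => T (x n)) atTop (𝓝 z)) :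
    ∀ a c : H, JF.tp (T a) z (T c) = 0 := by
  intro a c
  obtain ⟨D, hDpos, hD⟩ := JF.bound
  -- subtraction rules for the triple product
  have hneg_mid : ∀ u b v, JF.tp u (-b) v = -JF.tp u b v := fun u b v => by
    simpa using JF.smul_mid (-1) u b v
  have hsub_mid : ∀ u b b' v, JF.tp u (b - b') v = JF.tp u b v - JF.tp u b' v :=
    fun u b b' v => by
      rw [sub_eq_add_neg, JF.add_mid, hneg_mid, sub_eq_add_neg]
  have hneg_left : ∀ b u v, JF.tp (-b) u v = -JF.tp b u v := fun b u v => by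
    simpa using JF.smul_left (-1) b u v
  have hsub_left : ∀ b b' u v, JF.tp (b - b') u v = JF.tp b u v - JF.tp b' u v :=
    fun b b' u v => by
      rw [sub_eq_add_neg, JF.add_left, hneg_left, sub_eq_add_neg]
  have hsub_right : ∀ u b v v', JF.tp u b (v - v') = JF.tp u b v - JF.tp u b v' :=
    fun u b v v' => by
      rw [JF.symm, hsub_left, JF.symm u b v, JF.symm u b v']
  set w := JF.tp (T a) z (T c) with hw
  set b : ℕ → H := fun n => htp a (x n) c with hbdef
  -- b n → 0
  have hb0 : Tendsto b atTop (𝓝 0) := by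
    have h1 : Tendsto (fun n => (inner ℂ (x n) a : ℂ)) atTop (𝓝 0) := by
      simpa using hx.inner (tendsto_const_nhds (x := a))
    have h2 : Tendsto (fun n => (inner ℂ (x n) c : ℂ)) atTop (𝓝 0) := by
      simpa using hx.inner (tendsto_const_nhds (x := c))
    have : Tendsto (fun n => (2 : ℂ)⁻¹ • ((inner ℂ (x n) a : ℂ) • c + (inner ℂ (x n) c : ℂ) • a))
        atTop (𝓝 ((2 : ℂ)⁻¹ • ((0 : ℂ) • c + (0 : ℂ) • a))) :=
      ((h1.smul_const c).add (h2.smul_const a)).const_smul _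
    simpa [hbdef, htp] using this
  -- T (b n) → w
  have hTb : Tendsto (fun n => T (b n)) atTop (𝓝 w) := by
    rw [tendsto_iff_norm_sub_tendsto_zero]
    apply squeeze_zero (fun n => norm_nonneg _)
        (g := fun n => C * ‖a‖ * ‖x n‖ * ‖c‖ + D * ‖T a‖ * ‖T (x n) - z‖ * ‖T c‖)
    · intro n
      have key : T (b n) - w =
          (T (b n) - JF.tp (T a) (T (x n)) (T c)) + JF.tp (T a) (T (x n) - z) (T c) := by
        rw [hsub_mid]; abel
      rw [key]
      refine (norm_add_le _ _).trans (add_le_add (h a (x n) c) (hD _ _ _))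
    · have h1 : Tendsto (fun n => C * ‖a‖ * ‖x n‖ * ‖c‖) atTop (𝓝 (C * ‖a‖ * 0 * ‖c‖)) :=
        ((tendsto_const_nhds.mul (by simpa using hx.norm)).mul tendsto_const_nhds)
      have h2 : Tendsto (fun n => D * ‖T a‖ * ‖T (x n) - z‖ * ‖T c‖)
          atTop (𝓝 (D * ‖T a‖ * 0 * ‖T c‖)) := by
        have : Tendsto (fun n => ‖T (x n) - z‖) atTop (𝓝 0) :=
          tendsto_iff_norm_sub_tendsto_zero.mp hTx
        exact (tendsto_const_nhds.mul this).mul tendsto_const_nhds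
      simpa using h1.add h2
  -- the diagonal sequence
  have hdiag : ∀ y : H, htp y y y = (‖y‖ ^ 2 : ℝ) • y := by
    intro y
    have : (inner ℂ y y : ℂ) = (‖y‖ : ℂ) ^ 2 := inner_self_eq_norm_sq_to_K y
    simp only [htp, this]
    rw [← two_smul ℂ, smul_smul, smul_smul]
    norm_num
    rw [← Complex.ofReal_pow]
    exact rfl
  have hTbn : Tendsto (fun n => ‖T (b n) - w‖) atTop (𝓝 0) :=
    tendsto_iff_norm_sub_tendsto_zero.mp hTb
  have hTbnorm : Tendsto (fun n => ‖T (b n)‖) atTop (𝓝 ‖w‖) := hTb.norm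
  -- tp (T b n) (T b n) (T b n) → tp w w w
  have ht1 : Tendsto (fun n => JF.tp (T (b n)) (T (b n)) (T (b n))) atTop (𝓝 (JF.tp w w w)) := by
    rw [tendsto_iff_norm_sub_tendsto_zero]
    apply squeeze_zero (fun n => norm_nonneg _)
        (g := fun n => D * ‖T (b n) - w‖ * ‖T (b n)‖ * ‖T (b n)‖
          + D * ‖w‖ * ‖T (b n) - w‖ * ‖T (b n)‖ + D * ‖w‖ * ‖w‖ * ‖T (b n) - w‖)
    · intro n
      set u := T (b n)
      have key : JF.tp u u u - JF.tp w w w =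
          JF.tp (u - w) u u + JF.tp w (u - w) u + JF.tp w w (u - w) := by
        rw [hsub_left, hsub_mid, hsub_right]; abel
      rw [key]
      refine (norm_add₃_le).trans ?_
      exact add_le_add (add_le_add (hD _ _ _) (hD _ _ _)) (hD _ _ _)
    · have := ((((tendsto_const_nhds (x := D)).mul hTbn).mul hTbnorm).mul hTbnorm).add
        ((((tendsto_const_nhds (x := D * ‖w‖)).mul hTbn).mul hTbnorm).add
          ((tendsto_const_nhds (x := D * ‖w‖ * ‖w‖)).mul hTbn))
      simpa [mul_assoc, add_assoc] using this
  -- tp (T b n) (T b n) (T b n) → 0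
  have ht2 : Tendsto (fun n => JF.tp (T (b n)) (T (b n)) (T (b n))) atTop (𝓝 0) := by
    have hsq : Tendsto (fun n => (‖b n‖ ^ 2 : ℝ)) atTop (𝓝 0) := by
      simpa using (hb0.norm.pow 2)
    have hmain : Tendsto (fun n => T (htp (b n) (b n) (b n))) atTop (𝓝 0) := by
      have : Tendsto (fun n => (‖b n‖ ^ 2 : ℝ) • T (b n)) atTop (𝓝 ((0 : ℝ) • w)) :=
        hsq.smul hTb
      simp only [hdiag, map_smul]
      simpa using this
    have herr : Tendsto (fun n => T (htp (b n) (b n) (b n))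
        - JF.tp (T (b n)) (T (b n)) (T (b n))) atTop (𝓝 0) := by
      refine squeeze_zero_norm (fun n => h (b n) (b n) (b n)) ?_
      have := (((tendsto_const_nhds (x := C)).mul hb0.norm).mul hb0.norm).mul hb0.norm
      simpa using this
    have := hmain.sub herr
    simpa using this
  have hzero : JF.tp w w w = 0 := tendsto_nhds_unique ht1 ht2
  exact haniso w hzero
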